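/- Let k be a perfect field, let s be a positive integer, and let f ∈ k[x] be an irreducible polynomial with f(0) ≠ 0. Then the k[x]-modules k[x]/f^s and k[x]/(x−1)^s ⊗ k[x]/f are isomorphic. -/

import Mathlib

open Polynomial TensorProduct

/-- The `k`-linear operator on the `k[x]`-module `k[x]/(h)` given by the action of `x`,
i.e. multiplication by `x`. -/
noncomputable def mulXop (k : Type*) [Field k] (h : k[X]) :
    (k[X] ⧸ Ideal.span {h}) →ₗ[k] (k[X] ⧸ Ideal.span {h}) :=
  LinearMap.mulLeft k (Ideal.Quotient.mk (Ideal.span {h}) X)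

/-- Two `k[x]`-modules, presented as vector spaces equipped with the `k`-linear operator
by which `x` acts, are isomorphic iff there is a `k`-linear equivalence intertwining the
two operators. -/
def OpIso {k V W : Type*} [Field k] [AddCommGroup V] [Module k V]
    [AddCommGroup W] [Module k W] (f : V →ₗ[k] V) (g : W →ₗ[k] W) : Prop :=
  ∃ e : V ≃ₗ[k] W, ∀ v, e (f v) = g (e v)

/-- The direct sum of a family of operators, as an operator on the direct sum
(product) of the underlying spaces. -/
def piOp {k : Type*} [Field k] {ι : Type*} {V : ι → Type*} [∀ i, AddCommGroup (V i)]
    [∀ i, Module k (V i)] (f : ∀ i, V i →ₗ[k] V i) : (∀ i, V i) →ₗ[k] (∀ i, V i) :=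
  LinearMap.pi fun i => (f i).comp (LinearMap.proj i)

private lemma pow_mul_add_pow' {R : Type*} [CommRing R] {n : R} {m : ℕ}
    (hn : n ^ (m + 1) = 0) (c d : R) (j : ℕ) :
    n ^ m * (c + n * d) ^ j = n ^ m * c ^ j := by
  induction j with
  | zero => simp
  | succ j ih =>
    calc n ^ m * (c + n * d) ^ (j + 1)
        = (n ^ m * (c + n * d) ^ j) * (c + n * d) := by ring
      _ = (n ^ m * c ^ j) * (c + n * d) := by rw [ih]
      _ = n ^ m * c ^ (j + 1) + n ^ (m + 1) * (c ^ j * d) := by ring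
      _ = n ^ m * c ^ (j + 1) := by rw [hn]; ring

private lemma map_mulLeft_eq' {k A B : Type*} [CommSemiring k] [Semiring A] [Algebra k A]
    [Semiring B] [Algebra k B] (a : A) (b : B) :
    TensorProduct.map (LinearMap.mulLeft k a) (LinearMap.mulLeft k b)
      = LinearMap.mulLeft k (a ⊗ₜ[k] b) := by
  ext x y
  simp [Algebra.TensorProduct.tmul_mul_tmul]

private lemma tmul_ne_zero' {k A B : Type*} [Field k] [AddCommGroup A] [Module k A]
    [AddCommGroup B] [Module k B] {a : A} {b : B} (ha : a ≠ 0) (hb : b ≠ 0) :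
    a ⊗ₜ[k] b ≠ 0 := by
  obtain ⟨φ, hφ⟩ : ∃ φ : Module.Dual k A, φ a ≠ 0 := by
    by_contra h
    push_neg at h
    exact ha ((Module.forall_dual_apply_eq_zero_iff k a).mp h)
  intro h
  have h2 := congrArg (TensorProduct.lift ((LinearMap.lsmul k B).comp φ)) h
  simp only [TensorProduct.lift.tmul, LinearMap.coe_comp, Function.comp_apply,
    LinearMap.lsmul_apply, map_zero] at h2
  rcases smul_eq_zero.mp h2 with h3 | h3
  · exact hφ h3
  · exact hb h3


private lemma aeval_factor_pow' {k K T : Type*} [Field k] [CommRing K] [CommRing T]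
    [Algebra k K] [Algebra k T] [Algebra K T] [IsScalarTower k K T]
    (f : k[X]) (α : K) (g : K[X]) (hg : f.map (algebraMap k K) = (X - C α) * g)
    {τ ν : T} (hτ : τ - algebraMap K T α = ν) {m : ℕ} (hν : ν ^ (m + 1) = 0) :
    (aeval τ f) ^ (m + 1) = 0 ∧
      (aeval τ f) ^ m = algebraMap K T (g.eval α ^ m) * ν ^ m := by
  have hft : aeval τ f = ν * aeval τ g := by
    rw [← aeval_map_algebraMap K τ f, hg, map_mul, map_sub, aeval_X, aeval_C, hτ]
  obtain ⟨w, hw⟩ : ν ∣ aeval τ g - algebraMap K T (g.eval α) := by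
    rw [← hτ]
    have h1 : aeval τ g = eval τ (g.map (algebraMap K T)) := by rw [eval_map, aeval_def]
    have h2 : algebraMap K T (g.eval α) = eval (algebraMap K T α) (g.map (algebraMap K T)) := by
      rw [eval_map, Polynomial.eval₂_hom]
    rw [h1, h2]
    exact sub_dvd_eval_sub _ _ _
  have hG : aeval τ g = algebraMap K T (g.eval α) + ν * w := by linear_combination hw
  constructor
  · rw [hft, mul_pow, hν, zero_mul]
  · rw [hft, mul_pow, hG, pow_mul_add_pow' hν, map_pow]
    ring

set_option maxHeartbeats 2000000 in
set_option synthInstance.maxHeartbeats 1000000 in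
theorem stmt5 {k : Type*} [Field k] [PerfectField k] (s : ℕ) (hs : 0 < s)
    (f : k[X]) (hf : Irreducible f) (hf0 : f.eval 0 ≠ 0) :
    OpIso (mulXop k (f ^ s))
      (TensorProduct.map (mulXop k ((X - 1) ^ s)) (mulXop k f)) := by
  obtain ⟨m, rfl⟩ : ∃ m, s = m + 1 := ⟨s - 1, (Nat.succ_pred_eq_of_pos hs).symm⟩
  classical
  have hfne : f ≠ 0 := hf.ne_zero
  have hX1ne : (X - 1 : k[X]) ≠ 0 := by
    rw [(by rw [Polynomial.C_1] : (1 : k[X]) = C 1)]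
    exact Polynomial.X_sub_C_ne_zero 1
  haveI hmax : (Ideal.span {f}).IsMaximal := PrincipalIdealRing.isMaximal_of_irreducible hf
  haveI : (Ideal.span {f}).IsPrime := hmax.isPrime
  set IA : Ideal k[X] := Ideal.span {(X - 1 : k[X]) ^ (m + 1)} with hIA
  set IK : Ideal k[X] := Ideal.span {f} with hIK
  set u : k[X] ⧸ IA := Ideal.Quotient.mk IA X with hu_def
  set α : k[X] ⧸ IK := Ideal.Quotient.mk IK X with hα_def
  -- basic facts
  have hu1 : u - 1 = Ideal.Quotient.mk IA (X - 1) := by rw [map_sub, map_one]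
  have hun : (u - 1) ^ (m + 1) = 0 := by
    rw [hu1, ← map_pow, Ideal.Quotient.eq_zero_iff_mem]
    exact Ideal.mem_span_singleton_self _
  have hum : (u - 1) ^ m ≠ 0 := by
    intro hzero
    rw [hu1, ← map_pow, Ideal.Quotient.eq_zero_iff_mem, hIA, Ideal.mem_span_singleton] at hzero
    have hd := Polynomial.natDegree_le_of_dvd hzero (pow_ne_zero m hX1ne)
    rw [natDegree_pow, natDegree_pow,
      (by rw [Polynomial.C_1] : (1 : k[X]) = C 1), natDegree_X_sub_C] at hd
    omega
  have αne : α ≠ 0 := by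
    intro h0
    rw [hα_def, Ideal.Quotient.eq_zero_iff_mem, hIK, Ideal.mem_span_singleton] at h0
    obtain ⟨c, hc⟩ := h0
    rcases (Polynomial.irreducible_X (R := k)).isUnit_or_isUnit hc with hc1 | hc1
    · exact hf.not_isUnit hc1
    · obtain ⟨a, hai, hca⟩ := Polynomial.isUnit_iff.mp hc1
      have := congrArg (eval 0) hc
      rw [eval_X, eval_mul, ← hca, eval_C] at this
      exact mul_ne_zero hf0 hai.ne_zero this.symm
  have hαf : (aeval α f : k[X] ⧸ IK) = 0 := by
    have h1 : α = Ideal.Quotient.mkₐ k IK X := rfl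
    rw [h1, Polynomial.aeval_algHom_apply, Polynomial.aeval_X_left_apply,
      Ideal.Quotient.mkₐ_eq_mk, Ideal.Quotient.eq_zero_iff_mem]
    exact Ideal.mem_span_singleton_self f
  have hroot' : IsRoot (f.map (algebraMap k (k[X] ⧸ IK))) α := by
    rw [IsRoot.def, eval_map, ← aeval_def]
    exact hαf
  obtain ⟨g, hg⟩ := dvd_iff_isRoot.mpr hroot'
  have hsep : f.Separable := PerfectField.separable_of_irreducible hf
  have hgα : g.eval α ≠ 0 := by
    intro h0
    obtain ⟨g2, hg2⟩ := dvd_iff_isRoot.mpr h0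
    have hdv : (X - C α) * (X - C α) ∣ f.map (algebraMap k (k[X] ⧸ IK)) :=
      ⟨g2, by rw [hg, hg2]; ring⟩
    exact (Polynomial.not_isUnit_X_sub_C α) ((hsep.map).squarefree _ hdv)

  -- computations in the swapped tensor product
  set t' : (k[X] ⧸ IK) ⊗[k] (k[X] ⧸ IA) := α ⊗ₜ[k] u with ht'
  have hsc : ∀ y : k[X] ⧸ IK,
      algebraMap (k[X] ⧸ IK) ((k[X] ⧸ IK) ⊗[k] (k[X] ⧸ IA)) y = y ⊗ₜ[k] (1 : k[X] ⧸ IA) :=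
    fun y => by rw [Algebra.TensorProduct.algebraMap_apply, Algebra.algebraMap_self, RingHom.id_apply]
  have hft' : aeval t' f = (α ⊗ₜ[k] (u - 1)) * aeval t' g := by
    rw [← aeval_map_algebraMap (k[X] ⧸ IK) t' f, hg, map_mul, sub_eq_add_neg, map_add, map_neg, aeval_X, aeval_C, hsc,
      ht', TensorProduct.tmul_sub, sub_eq_add_neg]
  have hn1 : (α ⊗ₜ[k] (u - 1)) ^ (m + 1) = (0 : (k[X] ⧸ IK) ⊗[k] (k[X] ⧸ IA)) := by
    rw [Algebra.TensorProduct.tmul_pow, hun, TensorProduct.tmul_zero]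
  have htsub : t' - @algebraMap (k[X] ⧸ IK) ((k[X] ⧸ IK) ⊗[k] (k[X] ⧸ IA)) _ Algebra.TensorProduct.instSemiring _ α = α ⊗ₜ[k] (u - 1) := by
    rw [hsc, ht', TensorProduct.tmul_sub]
  obtain ⟨hz', hkey0⟩ := aeval_factor_pow' (T := (k[X] ⧸ IK) ⊗[k] (k[X] ⧸ IA)) f α g hg htsub hn1
  have hkey : (aeval t' f) ^ m = (α ^ m * (g.eval α) ^ m) ⊗ₜ[k] ((u - 1) ^ m) := by
    rw [hkey0, hsc, Algebra.TensorProduct.tmul_pow, Algebra.TensorProduct.tmul_mul_tmul,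
      one_mul, mul_comm (g.eval α ^ m) (α ^ m)]
  have hnz' : (aeval t' f) ^ m ≠ 0 := by
    rw [hkey]
    exact tmul_ne_zero' (mul_ne_zero (pow_ne_zero _ αne) (pow_ne_zero _ hgα)) hum
  -- transfer to the original tensor product
  set t : (k[X] ⧸ IA) ⊗[k] (k[X] ⧸ IK) := u ⊗ₜ[k] α with ht
  have hcom : ∀ p : k[X],
      (Algebra.TensorProduct.comm k (k[X] ⧸ IA) (k[X] ⧸ IK)) (aeval t p) = aeval t' p := by
    intro p
    rw [← Polynomial.aeval_algHom_apply, ht, Algebra.TensorProduct.comm_tmul, ← ht']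
  have hz : (aeval t f) ^ (m + 1) = 0 := by
    apply (Algebra.TensorProduct.comm k (k[X] ⧸ IA) (k[X] ⧸ IK)).injective
    rw [map_pow, hcom f, map_zero, hz']
  have hnz : (aeval t f) ^ m ≠ 0 := by
    intro h0
    apply hnz'
    rw [← hcom f, ← map_pow, h0, map_zero]
  -- the induced map on the quotient
  haveI : MonoidHomClass (k[X] →ₐ[k] (k[X] ⧸ IA) ⊗[k] (k[X] ⧸ IK)) k[X] ((k[X] ⧸ IA) ⊗[k] (k[X] ⧸ IK)) :=
    RingHomClass.toMonoidHomClass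
  have hker : ∀ p ∈ Ideal.span {f ^ (m + 1)}, (aeval t : k[X] →ₐ[k] _) p = 0 := by
    intro p hp
    obtain ⟨c, rfl⟩ := Ideal.mem_span_singleton.mp hp
    rw [map_mul, map_pow, hz]
    exact zero_mul ((aeval t) c)
  set φq := Ideal.Quotient.liftₐ (Ideal.span {f ^ (m + 1)}) (aeval t) hker with hφq
  have hφmk : ∀ p : k[X], φq (Ideal.Quotient.mk _ p) = aeval t p := by
    intro p
    rw [hφq, Ideal.Quotient.liftₐ_apply]
    rfl
  have hinj : Function.Injective φq := by
    rw [injective_iff_map_eq_zero]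
    intro z hz0
    obtain ⟨p, rfl⟩ := Ideal.Quotient.mk_surjective z
    rw [hφmk] at hz0
    set J : Ideal k[X] := RingHom.ker (aeval t : k[X] →ₐ[k] ((k[X] ⧸ IA) ⊗[k] (k[X] ⧸ IK))).toRingHom with hJdef
    obtain ⟨h, hJ⟩ := (IsPrincipalIdealRing.principal J).principal
    have hmem : p ∈ J := by rw [hJdef, RingHom.mem_ker]; exact hz0
    have hfs : f ^ (m + 1) ∈ J := by
      rw [hJdef, RingHom.mem_ker]
      show (aeval t) (f ^ (m + 1)) = 0
      rw [map_pow]; exact hz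
    have hdvd : h ∣ f ^ (m + 1) := by
      rwa [hJ, Ideal.submodule_span_eq, Ideal.mem_span_singleton] at hfs
    obtain ⟨i, hi, hass⟩ := (dvd_prime_pow hf.prime (m + 1)).mp hdvd
    have him : i = m + 1 := by
      by_contra hne
      have hfm : f ^ m ∈ J := by
        rw [hJ, Ideal.submodule_span_eq, Ideal.mem_span_singleton]
        exact hass.dvd.trans (pow_dvd_pow f (by omega))
      rw [hJdef, RingHom.mem_ker] at hfm
      exact hnz (by rw [← map_pow]; exact hfm)
    subst him
    have hp : f ^ (m + 1) ∣ p := hass.symm.dvd.trans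
      (by rwa [hJ, Ideal.submodule_span_eq, Ideal.mem_span_singleton] at hmem)
    rw [Ideal.Quotient.eq_zero_iff_mem, Ideal.mem_span_singleton]
    exact hp
  -- dimensions
  haveI hFD1 : FiniteDimensional k (k[X] ⧸ Ideal.span {f ^ (m + 1)}) :=
    Module.Finite.of_basis (AdjoinRoot.powerBasis (pow_ne_zero (m + 1) hfne)).basis
  haveI hFDA : FiniteDimensional k (k[X] ⧸ IA) :=
    Module.Finite.of_basis (AdjoinRoot.powerBasis (pow_ne_zero (m + 1) hX1ne)).basis
  haveI hFDK : FiniteDimensional k (k[X] ⧸ IK) :=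
    Module.Finite.of_basis (AdjoinRoot.powerBasis hfne).basis
  have e1 : Module.finrank k (k[X] ⧸ Ideal.span {f ^ (m + 1)}) = (f ^ (m + 1)).natDegree :=
    (AdjoinRoot.powerBasis (pow_ne_zero (m + 1) hfne)).finrank
  have e2 : Module.finrank k (k[X] ⧸ IA) = ((X - 1 : k[X]) ^ (m + 1)).natDegree :=
    (AdjoinRoot.powerBasis (pow_ne_zero (m + 1) hX1ne)).finrank
  have e3 : Module.finrank k (k[X] ⧸ IK) = f.natDegree :=
    (AdjoinRoot.powerBasis hfne).finrank
  have hdim : Module.finrank k (k[X] ⧸ Ideal.span {f ^ (m + 1)})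
      = Module.finrank k ((k[X] ⧸ IA) ⊗[k] (k[X] ⧸ IK)) := by
    rw [Module.finrank_tensorProduct, e1, e2, e3, natDegree_pow, natDegree_pow,
      (by rw [Polynomial.C_1] : (1 : k[X]) = C 1), natDegree_X_sub_C]
    ring
  have hsurj : Function.Surjective φq :=
    (LinearMap.injective_iff_surjective_of_finrank_eq_finrank hdim).mp
      (show Function.Injective φq.toLinearMap from hinj)
  -- conclude
  have hB : TensorProduct.map (mulXop k ((X - 1) ^ (m + 1))) (mulXop k f)
      = LinearMap.mulLeft k t := by
    rw [ht]; exact map_mulLeft_eq' u α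
  refine ⟨LinearEquiv.ofBijective φq.toLinearMap ⟨hinj, hsurj⟩, ?_⟩
  intro v
  obtain ⟨p, rfl⟩ := Ideal.Quotient.mk_surjective v
  show φq (mulXop k (f ^ (m + 1)) (Ideal.Quotient.mk _ p))
    = TensorProduct.map (mulXop k ((X - 1) ^ (m + 1))) (mulXop k f) (φq (Ideal.Quotient.mk _ p))
  have h1 : (mulXop k (f ^ (m + 1))) (Ideal.Quotient.mk _ p) = Ideal.Quotient.mk _ (X * p) := by
    show Ideal.Quotient.mk (Ideal.span {f ^ (m + 1)}) X
        * Ideal.Quotient.mk (Ideal.span {f ^ (m + 1)}) p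
      = Ideal.Quotient.mk (Ideal.span {f ^ (m + 1)}) (X * p)
    rw [← map_mul]
  rw [h1, hφmk, hφmk p, hB, map_mul, aeval_X]
  rfl
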